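/- For every complex number ν with Re(ν) > 0, the following integration-by-parts identity holds: ∫₀^∞ e^{−y² − νy} dy = 1/ν − 2/ν³ + 12/ν⁵ − (8/ν⁵) · ∫₀^∞ y e^{−y² − νy} (ν²y² + 3νy + 3) dy, both integrals being absolutely convergent. -/

import Mathlib

open MeasureTheory Set Filter

lemma aux_int (ν : ℂ) (hν : 0 < ν.re) (n : ℕ) :
    IntegrableOn (fun y : ℝ => (y : ℂ) ^ n * Complex.exp (-(y : ℂ) ^ 2 - ν * y)) (Set.Ioi 0) := by
  have hint := integrableOn_rpow_mul_exp_neg_mul_sq (b := 1) one_pos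
      (s := (n : ℝ)) (lt_of_lt_of_le neg_one_lt_zero (Nat.cast_nonneg n))
  refine Integrable.mono' hint ?_ ?_
  · apply Continuous.aestronglyMeasurable
    continuity
  · filter_upwards [ae_restrict_mem measurableSet_Ioi] with y hy
    have hy0 : (0:ℝ) < y := hy
    simp only [norm_mul, norm_pow, Complex.norm_exp]
    have hre : (-(y : ℂ) ^ 2 - ν * y).re = -y ^ 2 - ν.re * y := by
      simp [Complex.sub_re, Complex.mul_re, Complex.ofReal_re, Complex.ofReal_im, Complex.sq_norm]
      ring_nf
      simp [pow_two, Complex.mul_re]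
    rw [hre, Complex.norm_real, Real.norm_eq_abs, abs_of_pos hy0, Real.rpow_natCast]
    have h2 : Real.exp (-y ^ 2 - ν.re * y) ≤ Real.exp (-1 * y ^ 2) := by
      apply Real.exp_le_exp.mpr; nlinarith [mul_pos hν hy0]
    exact mul_le_mul_of_nonneg_left h2 (by positivity)

lemma aux_tendsto (ν : ℂ) (hν : 0 < ν.re) (n : ℕ) :
    Tendsto (fun y : ℝ => (y : ℂ) ^ n * Complex.exp (-(y : ℂ) ^ 2 - ν * y)) atTop (nhds 0) := by
  rw [tendsto_zero_iff_norm_tendsto_zero]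
  have hb : Tendsto (fun y : ℝ => y ^ n * Real.exp (-y)) atTop (nhds 0) := by
    simpa using Real.tendsto_pow_mul_exp_neg_atTop_nhds_zero n
  apply squeeze_zero_norm' _ hb
  filter_upwards [eventually_ge_atTop (1:ℝ)] with y hy
  have hy0 : (0:ℝ) < y := lt_of_lt_of_le one_pos hy
  simp only [norm_norm, norm_mul, norm_pow, Complex.norm_exp,
    Complex.norm_real, abs_of_pos hy0, Real.norm_eq_abs, Real.abs_exp]
  have hre : (-(y : ℂ) ^ 2 - ν * y).re = -y ^ 2 - ν.re * y := by
    simp [Complex.sub_re, Complex.mul_re, Complex.ofReal_re, Complex.ofReal_im]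
    ring_nf
    simp [pow_two, Complex.mul_re]
  rw [hre]
  have h2 : Real.exp (-y ^ 2 - ν.re * y) ≤ Real.exp (-y) := by
    apply Real.exp_le_exp.mpr; nlinarith [mul_pos hν hy0]
  exact mul_le_mul_of_nonneg_left h2 (by positivity)

lemma aux_deriv (ν : ℂ) (hν0 : ν ≠ 0) (y : ℝ) :
    HasDerivAt (fun y : ℝ => ((4 / ν ^ 3) * (y:ℂ) ^ 2 + (12 / ν ^ 4 - 2 / ν ^ 2) * y
        + (1 / ν - 2 / ν ^ 3 + 12 / ν ^ 5)) * Complex.exp (-(y : ℂ) ^ 2 - ν * y))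
      (-(Complex.exp (-(y:ℂ) ^ 2 - ν * y) + (8 / ν ^ 5) * ((y:ℂ) *
        Complex.exp (-(y:ℂ) ^ 2 - ν * y) * (ν ^ 2 * (y:ℂ) ^ 2 + 3 * ν * y + 3)))) y := by
  set a : ℂ := 4 / ν ^ 3 with ha
  set b : ℂ := 12 / ν ^ 4 - 2 / ν ^ 2 with hb
  set c : ℂ := 1 / ν - 2 / ν ^ 3 + 12 / ν ^ 5 with hc
  have hE : HasDerivAt (fun z : ℂ => (a * z ^ 2 + b * z + c) * Complex.exp (-z ^ 2 - ν * z))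
      ((a * (2 * y) + b) * Complex.exp (-(y:ℂ) ^ 2 - ν * y)
        + (a * (y:ℂ) ^ 2 + b * y + c) * ((-(2 * y) - ν) * Complex.exp (-(y:ℂ) ^ 2 - ν * y))) (y : ℂ) := by
    have hp : HasDerivAt (fun z : ℂ => a * z ^ 2 + b * z + c) (a * (2 * y) + b) (y : ℂ) := by
      have := (((hasDerivAt_pow 2 (y:ℂ)).const_mul a).add
        (((hasDerivAt_id (y:ℂ)).const_mul b))).add_const c
      exact this.congr_deriv (by push_cast; ring)
    have he : HasDerivAt (fun z : ℂ => Complex.exp (-z ^ 2 - ν * z))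
        ((-(2 * y) - ν) * Complex.exp (-(y:ℂ) ^ 2 - ν * y)) (y : ℂ) := by
      have harg : HasDerivAt (fun z : ℂ => -z ^ 2 - ν * z) (-(2 * (y:ℂ)) - ν) (y:ℂ) := by
        have := ((hasDerivAt_pow 2 (y:ℂ)).neg).sub ((hasDerivAt_id (y:ℂ)).const_mul ν)
        exact this.congr_deriv (by push_cast; ring)
      simpa [mul_comm] using harg.cexp
    exact hp.mul he
  have hA : a * ν ^ 3 = 4 := by rw [ha]; field_simp
  have hB : b * ν ^ 4 = 12 - 2 * ν ^ 2 := by rw [hb]; field_simp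
  have hC : c * ν ^ 5 = ν ^ 4 - 2 * ν ^ 2 + 12 := by rw [hc]; field_simp
  have hD : (8 / ν ^ 5) * ν ^ 5 = 8 := by field_simp
  have hpoly5 : ν ^ 5 * ((a * (2 * (y:ℂ)) + b) + (a * (y:ℂ) ^ 2 + b * y + c) * (-(2 * (y:ℂ)) - ν))
      = ν ^ 5 * (-(1 + (8 / ν ^ 5) * ((y:ℂ) * (ν ^ 2 * (y:ℂ) ^ 2 + 3 * ν * y + 3)))) := by
    linear_combination (2 * (y:ℂ) * ν ^ 2 + (-(2*(y:ℂ)) - ν) * (y:ℂ) ^ 2 * ν ^ 2) * hA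
      + (ν + (-(2*(y:ℂ)) - ν) * (y:ℂ) * ν) * hB + (-(2*(y:ℂ)) - ν) * hC
      + ((ν ^ 2 * (y:ℂ) ^ 3 + 3 * ν * (y:ℂ) ^ 2 + 3 * (y:ℂ))) * hD
  have hpoly : (a * (2 * (y:ℂ)) + b) + (a * (y:ℂ) ^ 2 + b * y + c) * (-(2 * (y:ℂ)) - ν)
      = -(1 + (8 / ν ^ 5) * ((y:ℂ) * (ν ^ 2 * (y:ℂ) ^ 2 + 3 * ν * y + 3))) :=
    mul_left_cancel₀ (pow_ne_zero 5 hν0) hpoly5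
  have := hE.comp_ofReal
  convert this using 1
  linear_combination (-(Complex.exp (-(y:ℂ) ^ 2 - ν * y))) * hpoly

set_option maxHeartbeats 1000000 in
theorem integral_exp_sq_integration_by_parts (ν : ℂ) (hν : 0 < ν.re) :
    IntegrableOn (fun y : ℝ => Complex.exp (-(y : ℂ) ^ 2 - ν * y)) (Set.Ioi 0) ∧
    IntegrableOn (fun y : ℝ => (y : ℂ) * Complex.exp (-(y : ℂ) ^ 2 - ν * y) *
      (ν ^ 2 * (y : ℂ) ^ 2 + 3 * ν * y + 3)) (Set.Ioi 0) ∧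
    ∫ y in Set.Ioi (0 : ℝ), Complex.exp (-(y : ℂ) ^ 2 - ν * y) =
      1 / ν - 2 / ν ^ 3 + 12 / ν ^ 5 - (8 / ν ^ 5) *
        ∫ y in Set.Ioi (0 : ℝ), (y : ℂ) * Complex.exp (-(y : ℂ) ^ 2 - ν * y) *
          (ν ^ 2 * (y : ℂ) ^ 2 + 3 * ν * y + 3) := by
  have hν0 : ν ≠ 0 := fun h => by simp [h] at hν
  have h0 : IntegrableOn (fun y : ℝ => Complex.exp (-(y : ℂ) ^ 2 - ν * y)) (Set.Ioi 0) := by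
    simpa using aux_int ν hν 0
  have h1 := aux_int ν hν 1
  have h2 := aux_int ν hν 2
  have h3 := aux_int ν hν 3
  have hGint : IntegrableOn (fun y : ℝ => (y : ℂ) * Complex.exp (-(y : ℂ) ^ 2 - ν * y) *
      (ν ^ 2 * (y : ℂ) ^ 2 + 3 * ν * y + 3)) (Set.Ioi 0) := by
    have hGeq : (fun y : ℝ => (y : ℂ) * Complex.exp (-(y : ℂ) ^ 2 - ν * y) *
        (ν ^ 2 * (y : ℂ) ^ 2 + 3 * ν * y + 3)) =
        fun y : ℝ => ν ^ 2 * ((y:ℂ) ^ 3 * Complex.exp (-(y : ℂ) ^ 2 - ν * y))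
          + (3 * ν) * ((y:ℂ) ^ 2 * Complex.exp (-(y : ℂ) ^ 2 - ν * y))
          + (3:ℂ) * ((y:ℂ) ^ 1 * Complex.exp (-(y : ℂ) ^ 2 - ν * y)) := by
      funext y; ring
    rw [hGeq]
    exact ((h3.const_mul _).add (h2.const_mul _)).add (h1.const_mul _)
  refine ⟨h0, hGint, ?_⟩
  have hFcont : ContinuousWithinAt (fun y : ℝ => ((4 / ν ^ 3) * (y:ℂ) ^ 2
      + (12 / ν ^ 4 - 2 / ν ^ 2) * y + (1 / ν - 2 / ν ^ 3 + 12 / ν ^ 5)) *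
      Complex.exp (-(y : ℂ) ^ 2 - ν * y)) (Set.Ici 0) 0 :=
    (aux_deriv ν hν0 0).continuousAt.continuousWithinAt
  have hFtop : Tendsto (fun y : ℝ => ((4 / ν ^ 3) * (y:ℂ) ^ 2
      + (12 / ν ^ 4 - 2 / ν ^ 2) * y + (1 / ν - 2 / ν ^ 3 + 12 / ν ^ 5)) *
      Complex.exp (-(y : ℂ) ^ 2 - ν * y)) atTop (nhds 0) := by
    have heq : (fun y : ℝ => ((4 / ν ^ 3) * (y:ℂ) ^ 2
        + (12 / ν ^ 4 - 2 / ν ^ 2) * y + (1 / ν - 2 / ν ^ 3 + 12 / ν ^ 5)) *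
        Complex.exp (-(y : ℂ) ^ 2 - ν * y)) =
        fun y : ℝ => (4 / ν ^ 3) * ((y:ℂ) ^ 2 * Complex.exp (-(y : ℂ) ^ 2 - ν * y))
          + (12 / ν ^ 4 - 2 / ν ^ 2) * ((y:ℂ) ^ 1 * Complex.exp (-(y : ℂ) ^ 2 - ν * y))
          + (1 / ν - 2 / ν ^ 3 + 12 / ν ^ 5) * ((y:ℂ) ^ 0 * Complex.exp (-(y : ℂ) ^ 2 - ν * y)) := by
      funext y; ring
    rw [heq]
    simpa using (((aux_tendsto ν hν 2).const_mul (4 / ν ^ 3)).add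
      ((aux_tendsto ν hν 1).const_mul (12 / ν ^ 4 - 2 / ν ^ 2))).add
      ((aux_tendsto ν hν 0).const_mul (1 / ν - 2 / ν ^ 3 + 12 / ν ^ 5))
  have hint' : IntegrableOn (fun y : ℝ => -(Complex.exp (-(y:ℂ) ^ 2 - ν * y) + (8 / ν ^ 5) *
      ((y:ℂ) * Complex.exp (-(y:ℂ) ^ 2 - ν * y) * (ν ^ 2 * (y:ℂ) ^ 2 + 3 * ν * y + 3))))
      (Set.Ioi 0) := (h0.add (hGint.const_mul _)).neg
  have key := integral_Ioi_of_hasDerivAt_of_tendsto hFcont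
    (fun x _ => aux_deriv ν hν0 x) hint' hFtop
  rw [integral_neg, integral_add h0 (hGint.const_mul _), integral_const_mul] at key
  norm_num [Complex.exp_zero] at key
  linear_combination -key
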